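/- If every cycle in a finite directed subgraph passing through a distinguished set M has odd maximal priority, and an infinite path π visits some vertex x ∈ M infinitely often and stays within the subgraph, then the maximal priority among the vertices visited infinitely often by π is odd. -/

import Mathlib

open Set Filter

/-- If every cycle of the subgraph through the set `M` has odd maximal priority, and
an infinite path `π` of the subgraph visits some `x ∈ M` infinitely often, then the
maximal priority among the vertices visited infinitely often by `π` is odd. -/
theorem stmt14 {V : Type*} [Fintype V]
    (E' : V → Set V) (χ : V → ℕ) (M : Set V)
    (hcycles : ∀ x ∈ M, ∀ m, 1 ≤ m → ∀ p : ℕ → V, p 0 = x → p m = x →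
      (∀ i < m, p (i + 1) ∈ E' (p i)) →
      Odd ((Finset.range m).sup fun i => χ (p i)))
    (π : ℕ → V) (hπ : ∀ i, π (i + 1) ∈ E' (π i))
    (x : V) (hx : x ∈ M) (hfreq : ∃ᶠ i in atTop, π i = x) :
    ∃ b, Odd b ∧ (∀ v, (∃ᶠ i in atTop, π i = v) → χ v ≤ b) ∧
      (∃ v, (∃ᶠ i in atTop, π i = v) ∧ χ v = b) := by
  classical
  set F : Finset V := Finset.univ.filter (fun v => ∃ᶠ i in atTop, π i = v) with hF
  have hxF : x ∈ F := by simp [hF, hfreq]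
  have hFne : F.Nonempty := ⟨x, hxF⟩
  obtain ⟨v, hvF, hvb⟩ := F.exists_mem_eq_sup hFne χ
  have hvfreq : ∃ᶠ i in atTop, π i = v := by
    simpa [hF] using hvF
  -- eventually π i ∈ F
  have hev : ∀ᶠ i in atTop, π i ∈ F := by
    have : ∀ᶠ i in atTop, ∀ w ∈ (Finset.univ \ F), π i ≠ w := by
      rw [Filter.eventually_all_finset]
      intro w hw
      have hw' : ¬ (∃ᶠ i in atTop, π i = w) := by
        intro h
        exact (Finset.mem_sdiff.mp hw).2 (by simp [hF, h])
      simpa [Filter.not_frequently] using hw'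
    filter_upwards [this] with i hi
    by_contra hc
    exact hi (π i) (by simp [hc]) rfl
  obtain ⟨N, hN⟩ := Filter.eventually_atTop.mp hev
  obtain ⟨n₁, hn₁N, hn₁⟩ := (Filter.frequently_atTop.mp hfreq) N
  obtain ⟨n₂, hn₂, hn₂v⟩ := (Filter.frequently_atTop.mp hvfreq) (n₁ + 1)
  obtain ⟨n₃, hn₃, hn₃x⟩ := (Filter.frequently_atTop.mp hfreq) (n₂ + 1)
  set m := n₃ - n₁ with hm
  have hn₁₃ : n₁ < n₃ := by omega
  have hm1 : 1 ≤ m := by omega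
  have hodd := hcycles x hx m hm1 (fun i => π (n₁ + i)) (by simpa using hn₁)
    (by show π (n₁ + m) = x; rw [show n₁ + m = n₃ by omega]; exact hn₃x)
    (fun i _ => by show π (n₁ + (i+1)) ∈ E' (π (n₁ + i)); rw [show n₁ + (i+1) = (n₁ + i) + 1 from by omega]; exact hπ _)
  have hsup : ((Finset.range m).sup fun i => χ (π (n₁ + i))) = F.sup χ := by
    apply le_antisymm
    · apply Finset.sup_le
      intro i _
      exact Finset.le_sup (hN _ (by omega))
    · rw [hvb]
      have : v = π (n₁ + (n₂ - n₁)) := by rw [show n₁ + (n₂ - n₁) = n₂ by omega]; exact hn₂v.symm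
      have hmem : n₂ - n₁ ∈ Finset.range m := Finset.mem_range.mpr (by omega)
      rw [this]
      exact Finset.le_sup (f := fun i => χ (π (n₁ + i))) hmem
  rw [hsup] at hodd
  exact ⟨F.sup χ, hodd, fun w hw => Finset.le_sup (by simp [hF, hw]), v, hvfreq, hvb.symm⟩
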